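/- arXiv:math/0408020 — 8 statements merged into one kernel-verified Lean document; each statement's English description precedes it below -/
import Mathlib

section
/- Let (G, G⁺) be an ordered abelian group. Then G is almost unperforated (i.e., for all g ∈ G and n ∈ ℕ, if ng ∈ G⁺ and (n+1)g ∈ G⁺ then g ∈ G⁺) if and only if the positive cone G⁺, as an ordered abelian semigroup with the induced order, is almost unperforated (i.e., for all x, y ∈ G⁺ and n, m ∈ ℕ with nx ≤ my and n > m, one has x ≤ y). -/
/-- An ordered abelian group `(G, G⁺)`: `P` is the positive cone (an additive submonoid with
`P ∩ (-P) = {0}`), and the order is `x ≤ y ↔ y - x ∈ P`.  `G` is almost unperforated iff the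
positive cone `G⁺`, with the induced order, is almost unperforated as a positive ordered
abelian semigroup. -/
theorem stmt_0 {G : Type*} [AddCommGroup G] (P : AddSubmonoid G)
    (hP : ∀ g : G, g ∈ P → -g ∈ P → g = 0) :
    (∀ (g : G) (n : ℕ), n • g ∈ P → (n + 1) • g ∈ P → g ∈ P) ↔
      (∀ x ∈ P, ∀ y ∈ P, ∀ n m : ℕ, m < n → m • y - n • x ∈ P → y - x ∈ P) := by
  constructor
  · intro h x hx y hy n m hmn hd
    have h1 : (n - m) • x + m • x = n • x := by
      rw [← add_nsmul, Nat.sub_add_cancel hmn.le]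
    have h2 : (n - (m + 1)) • x + m • x + x = n • x := by
      rw [add_assoc, ← succ_nsmul, ← add_nsmul, Nat.sub_add_cancel hmn]
    have e1 : m • (y - x) = (m • y - n • x) + (n - m) • x := by
      rw [← h1, smul_sub]; abel
    have e2 : (m + 1) • (y - x) = (m • y - n • x) + (n - (m + 1)) • x + y := by
      rw [← h2, succ_nsmul, smul_sub]; abel
    refine h (y - x) m ?_ ?_
    · rw [e1]; exact add_mem hd (nsmul_mem hx _)
    · rw [e2]; exact add_mem (add_mem hd (nsmul_mem hx _)) hy
  · intro h g n h1 h2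
    have key := h (n • g) h1 ((n + 1) • g) h2 (n + 1) n (lt_add_one n)
      (by rw [smul_smul, smul_smul, mul_comm, sub_self]; exact zero_mem P)
    have : (n + 1) • g - n • g = g := by rw [succ_nsmul]; abel
    rwa [this] at key
end

section
/- Let (G, G⁺) be a simple ordered abelian group (meaning: every nonzero positive element is an order unit, i.e., for every g ∈ G⁺ \ {0} and every h ∈ G there exists k ∈ ℕ with h ≤ kg). Then G is almost unperforated if and only if G is weakly unperforated (i.e., for all g ∈ G and n ∈ ℕ with n ≥ 1, if ng ∈ G⁺ \ {0} then g ∈ G⁺). -/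
/-- A simple ordered abelian group `(G, G⁺)` (every nonzero positive element is an order unit)
is almost unperforated iff it is weakly unperforated. -/
theorem stmt_1 {G : Type*} [AddCommGroup G] (P : AddSubmonoid G)
    (hP : ∀ g : G, g ∈ P → -g ∈ P → g = 0)
    (hsimple : ∀ g : G, g ∈ P → g ≠ 0 → ∀ h : G, ∃ k : ℕ, k • g - h ∈ P) :
    (∀ (g : G) (n : ℕ), n • g ∈ P → (n + 1) • g ∈ P → g ∈ P) ↔
      (∀ (g : G) (n : ℕ), 1 ≤ n → n • g ∈ P → n • g ≠ 0 → g ∈ P) := by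
  constructor
  · intro hau g n hn hng hne
    obtain ⟨m, rfl⟩ : ∃ m, n = m + 1 := ⟨n - 1, by omega⟩
    set n := m + 1 with hndef
    obtain ⟨k, hk⟩ := hsimple (n • g) hng hne (-g)
    have hk' : (k * n + 1) • g ∈ P := by
      have e : k • (n • g) - -g = (k * n + 1) • g := by
        rw [sub_neg_eq_add, smul_smul, add_nsmul, one_nsmul]
      rwa [e] at hk
    have h1 : (k * n * n) • g ∈ P := by
      rw [mul_smul]
      exact AddSubmonoid.nsmul_mem P hng (k * n)
    have h2 : (k * n * n + 1) • g ∈ P := by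
      have e : k * n * n + 1 = k * m * n + (k * n + 1) := by
        rw [hndef]; ring
      rw [e, add_nsmul]
      exact P.add_mem (by rw [mul_smul]; exact AddSubmonoid.nsmul_mem P hng (k * m)) hk'
    exact hau g (k * n * n) h1 h2
  · intro hwu g n hng hng1
    by_cases h0 : n • g = 0
    · have e : (n + 1) • g = g := by rw [add_nsmul, h0, one_nsmul, zero_add]
      rwa [e] at hng1
    · rcases Nat.eq_zero_or_pos n with h | h
      · subst h; simp at h0
      · exact hwu g n h hng h0
end

section
/- Let G = ℤ² with positive cone G⁺ the additive submonoid generated by (1,0), (0,1), and (2,−2). Then (G, G⁺) is almost unperforated: for every g ∈ ℤ² and n ∈ ℕ, if ng ∈ G⁺ and (n+1)g ∈ G⁺, then g ∈ G⁺. -/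
private lemma cone_of (a b c : ℕ) :
    (((a : ℤ) + 2 * c, (b : ℤ) - 2 * c) : ℤ × ℤ) ∈
      AddSubmonoid.closure {((1, 0) : ℤ × ℤ), (0, 1), (2, -2)} := by
  have h1 : ((1, 0) : ℤ × ℤ) ∈ AddSubmonoid.closure {((1, 0) : ℤ × ℤ), (0, 1), (2, -2)} :=
    AddSubmonoid.subset_closure (by simp)
  have h2 : ((0, 1) : ℤ × ℤ) ∈ AddSubmonoid.closure {((1, 0) : ℤ × ℤ), (0, 1), (2, -2)} :=
    AddSubmonoid.subset_closure (by simp)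
  have h3 : ((2, -2) : ℤ × ℤ) ∈ AddSubmonoid.closure {((1, 0) : ℤ × ℤ), (0, 1), (2, -2)} :=
    AddSubmonoid.subset_closure (by simp)
  have := AddSubmonoid.add_mem _ (AddSubmonoid.add_mem _
    (AddSubmonoid.nsmul_mem _ h1 a) (AddSubmonoid.nsmul_mem _ h2 b))
    (AddSubmonoid.nsmul_mem _ h3 c)
  convert this using 1
  ext <;> simp [Prod.smul_fst, Prod.smul_snd] <;> ring

private lemma cone_iff (p : ℤ × ℤ) :
    p ∈ AddSubmonoid.closure {((1, 0) : ℤ × ℤ), (0, 1), (2, -2)} ↔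
      0 ≤ p.1 ∧ 0 ≤ p.1 + p.2 ∧ (p.1 + p.2 = 0 → 2 ∣ p.2) := by
  constructor
  · intro h
    induction h using AddSubmonoid.closure_induction with
    | mem x hx =>
      rcases hx with h | h | h <;> subst h <;> refine ⟨by norm_num, by norm_num, ?_⟩ <;> omega
    | zero => simp
    | add x y hx hy ihx ihy =>
      obtain ⟨hx1, hx2, hx3⟩ := ihx
      obtain ⟨hy1, hy2, hy3⟩ := ihy
      refine ⟨by simpa using add_nonneg hx1 hy1, ?_, ?_⟩
      · simp only [Prod.fst_add, Prod.snd_add]; omega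
      · simp only [Prod.fst_add, Prod.snd_add]
        intro h
        have h1 : x.1 + x.2 = 0 := by omega
        have h2 : y.1 + y.2 = 0 := by omega
        obtain ⟨k, hk⟩ := hx3 h1
        obtain ⟨l, hl⟩ := hy3 h2
        exact ⟨k + l, by omega⟩
  · rintro ⟨h1, h2, h3⟩
    obtain ⟨x, y⟩ := p
    simp only at h1 h2 h3
    rcases le_or_gt 0 y with hy | hy
    · have := cone_of x.toNat y.toNat 0
      simpa [Int.toNat_of_nonneg h1, Int.toNat_of_nonneg hy] using this
    · rcases Int.even_or_odd y with ⟨k, hk⟩ | ⟨k, hk⟩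
      · -- y = 2k, k < 0; use c = -k, a = x + y, b = 0
        have := cone_of (x + y).toNat 0 (-k).toNat
        have hc : ((-k).toNat : ℤ) = -k := Int.toNat_of_nonneg (by omega)
        have ha : (((x + y).toNat : ℤ)) = x + y := Int.toNat_of_nonneg h2
        convert this using 2 <;> omega
      · -- y = 2k+1 odd, y < 0; x + y > 0 since 2 ∤ y
        have hxy : 0 < x + y := by
          rcases lt_or_eq_of_le h2 with h | h
          · exact h
          · exfalso; obtain ⟨l, hl⟩ := h3 h.symm; omega
        -- c = -k, b = 1, a = x + y - 1 ; check: a + 2c = x + y - 1 - 2k = x (since y = 2k+1)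
        have := cone_of (x + y - 1).toNat 1 (-k).toNat
        have hc : ((-k).toNat : ℤ) = -k := Int.toNat_of_nonneg (by omega)
        have ha : (((x + y - 1).toNat : ℤ)) = x + y - 1 := Int.toNat_of_nonneg (by omega)
        convert this using 2 <;> push_cast <;> omega

/-- `G = ℤ²` with positive cone generated by `(1,0)`, `(0,1)`, `(2,-2)` is almost
unperforated. -/
theorem stmt_3 (g : ℤ × ℤ) (n : ℕ)
    (h1 : n • g ∈ AddSubmonoid.closure {((1, 0) : ℤ × ℤ), (0, 1), (2, -2)})
    (h2 : (n + 1) • g ∈ AddSubmonoid.closure {((1, 0) : ℤ × ℤ), (0, 1), (2, -2)}) :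
    g ∈ AddSubmonoid.closure {((1, 0) : ℤ × ℤ), (0, 1), (2, -2)} := by
  rcases n with _ | m
  · simpa using h2
  rw [cone_iff] at h1 h2 ⊢
  obtain ⟨x, y⟩ := g
  simp only [Prod.smul_fst, Prod.smul_snd] at h1 h2
  simp only [nsmul_eq_mul] at h1 h2
  obtain ⟨a1, a2, a3⟩ := h1
  obtain ⟨b1, b2, b3⟩ := h2
  have hm : (0 : ℤ) < (m : ℤ) + 1 := by positivity
  push_cast at a1 a2 a3 b1 b2 b3
  constructor
  · nlinarith
  constructor
  · nlinarith
  · intro h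
    have hA : 2 ∣ ((m : ℤ) + 1) * y := a3 (by nlinarith)
    have hB : 2 ∣ ((m : ℤ) + 1 + 1) * y := b3 (by nlinarith)
    obtain ⟨k, hk⟩ := hA
    obtain ⟨l, hl⟩ := hB
    exact ⟨l - k, by linear_combination hl - hk⟩
end

section
/- Let W be a positive ordered abelian semigroup. Suppose W satisfies: for all x, y ∈ W with x ∝ y (meaning x ≤ ny for some n ∈ ℕ) and f(x) < f(y) for all states f ∈ S(W, y), one has x ≤ y. Then W is almost unperforated. -/
open scoped ENNReal

/-- Let `W` be a positive ordered abelian semigroup.  If for all `x, y ∈ W` with `x ∝ y`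
(i.e. `x ≤ n • y` for some `n`) and `f x < f y` for all states `f ∈ S(W, y)` one has
`x ≤ y`, then `W` is almost unperforated. -/
theorem stmt_5 {W : Type*} [AddCommMonoid W] [Preorder W]
    (hadd : ∀ x y z : W, x ≤ y → x + z ≤ y + z)
    (hpos : ∀ x y : W, y ≤ y + x)
    (H : ∀ x y : W, (∃ n : ℕ, x ≤ n • y) →
      (∀ f : W → ℝ≥0∞, (∀ a b : W, f (a + b) = f a + f b) →
        (∀ a b : W, a ≤ b → f a ≤ f b) → f y = 1 → f x < f y) →
      x ≤ y) :
    ∀ (x y : W) (n m : ℕ), m < n → n • x ≤ m • y → x ≤ y := by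
  intro x y n m hmn hle
  have hn : 0 < n := lt_of_le_of_lt (Nat.zero_le m) hmn
  -- x ≤ n • x
  have hxnx : x ≤ n • x := by
    obtain ⟨k, rfl⟩ := Nat.exists_eq_succ_of_ne_zero hn.ne'
    rw [succ_nsmul, add_comm]
    exact hpos (k • x) x
  have hprop : ∃ k : ℕ, x ≤ k • y := ⟨m, le_trans (le_trans hxnx hle) le_rfl⟩
  refine H x y hprop ?_
  intro f faddit fmono hfy
  -- f 0 = 0
  have h0y : (0 : W) ≤ y := by simpa using hpos y 0
  have hf0 : f 0 = 0 := by
    have h := faddit 0 0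
    rw [zero_add] at h
    have hfin : f 0 ≠ ∞ := by
      intro hi
      have := fmono 0 y h0y
      rw [hi, hfy] at this
      simp [hi] at this
    exact ((ENNReal.add_right_inj hfin).mp (by rw [add_zero, ← h])).symm
  -- f (k • a) = k * f a
  have fsmul : ∀ (k : ℕ) (a : W), f (k • a) = k * f a := by
    intro k a
    induction k with
    | zero => simpa using hf0
    | succ k ih =>
      rw [succ_nsmul, faddit, ih]
      push_cast
      ring
  have hkey : (n : ℝ≥0∞) * f x ≤ m := by
    have := fmono _ _ hle
    rwa [fsmul, fsmul, hfy, mul_one] at this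
  rw [hfy]
  by_contra hnot
  push_neg at hnot
  have : (n : ℝ≥0∞) ≤ (n : ℝ≥0∞) * f x :=
    le_mul_of_one_le_right (by simp) hnot
  have hnm : (n : ℝ≥0∞) ≤ m := this.trans hkey
  exact absurd (Nat.cast_le.mp hnm) (not_le.mpr hmn)
end

section
/- Let A be a C*-algebra and a, b ∈ A positive elements with ‖a − b‖ < ε. Then (a − ε)₊ is Cuntz subequivalent to b, i.e., there exists a sequence (xₙ) in A with xₙ* b xₙ → (a − ε)₊. -/
open Filter Topology Unitization

open scoped CStarAlgebra

set_option maxHeartbeats 1000000 in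
/-- In a C*-algebra, if `a, b` are positive and `‖a - b‖ < ε`, then `(a - ε)₊ ≾ b`. -/
theorem stmt_9 {A : Type*} [NonUnitalCStarAlgebra A] [PartialOrder A] [StarOrderedRing A]
    (a b : A) (ha : 0 ≤ a) (hb : 0 ≤ b) (ε : ℝ) (h : ‖a - b‖ < ε) :
    ∃ x : ℕ → A, Tendsto (fun n => star (x n) * b * x n) atTop
      (𝓝 (cfcₙ (fun t : ℝ => max (t - ε) 0) a)) := by
  have hε : 0 < ε := (norm_nonneg _).trans_lt h
  set δ : ℝ := ε - ‖a - b‖ with hδdef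
  have hδ : 0 < δ := sub_pos.mpr h
  set f : ℝ → ℝ := fun t => max (t - ε) 0 with hfdef
  have hf0 : f 0 = 0 := by simp [hfdef, hε.le]
  have hfc : Continuous f := by fun_prop
  set g : ℝ → ℝ := fun t => Real.sqrt (max (t - ε) 0) with hgdef
  have hg0 : g 0 = 0 := by simp [hgdef, hε.le]
  have hgc : Continuous g := by fun_prop
  set e : A := cfcₙ f a with hedef
  set r : A := cfcₙ g a with hrdef
  set aa : A⁺¹ := (a : A⁺¹) with haadef
  set ba : A⁺¹ := (b : A⁺¹) with hbadef
  set ea : A⁺¹ := (e : A⁺¹) with headef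
  set ra : A⁺¹ := (r : A⁺¹) with hradef
  have h_ea : ea = cfc f aa := Unitization.real_cfcₙ_eq_cfc_inr a f hf0
  have h_ra : ra = cfc g aa := Unitization.real_cfcₙ_eq_cfc_inr a g hg0
  have haa : 0 ≤ aa := inr_nonneg_iff.mpr ha
  have hba : 0 ≤ ba := inr_nonneg_iff.mpr hb
  have hra_sa : IsSelfAdjoint ra := h_ra ▸ cfc_predicate g aa
  have hea_sa : IsSelfAdjoint ea := h_ea ▸ cfc_predicate f aa
  -- step 1
  have step1 : aa - algebraMap ℝ A⁺¹ ε ≤ ba - algebraMap ℝ A⁺¹ δ := by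
    have hsa : IsSelfAdjoint (aa - ba) := by
      rw [haadef, hbadef, ← inr_sub ℂ a b]
      exact isSelfAdjoint_inr.mpr (ha.isSelfAdjoint.sub hb.isSelfAdjoint)
    have hnorm : ‖aa - ba‖ = ‖a - b‖ := by
      rw [haadef, hbadef, ← inr_sub ℂ a b, norm_inr]
    have h1 : aa - ba ≤ algebraMap ℝ A⁺¹ ‖a - b‖ :=
      hnorm ▸ IsSelfAdjoint.le_algebraMap_norm_self hsa
    have h3 : algebraMap ℝ A⁺¹ ε - algebraMap ℝ A⁺¹ δ = algebraMap ℝ A⁺¹ ‖a - b‖ := by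
      rw [← map_sub]; congr 1; rw [hδdef]; ring
    rw [sub_le_sub_iff, add_comm ba]
    rw [← sub_le_sub_iff, h3]
    exact h1
  set B : A⁺¹ := ra * ba * ra with hBdef
  have hB : 0 ≤ B := by
    have := star_left_conjugate_nonneg hba ra
    rwa [hra_sa.star_eq] at this
  have step2 : ra * (aa - algebraMap ℝ A⁺¹ ε) * ra ≤ ra * (ba - algebraMap ℝ A⁺¹ δ) * ra := by
    have := star_left_conjugate_le_conjugate step1 ra
    rwa [hra_sa.star_eq] at this
  have hgg : ∀ s ∈ spectrum ℝ aa, g s * ((s - ε) * g s) = f s * f s := by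
    intro s _
    simp only [hfdef, hgdef]
    rcases le_or_gt s ε with hs | hs
    · have : max (s - ε) 0 = 0 := max_eq_right (by linarith)
      simp [this]
    · have h1 : max (s - ε) 0 = s - ε := max_eq_left (by linarith)
      rw [h1]
      rw [show Real.sqrt (s - ε) * ((s - ε) * Real.sqrt (s - ε)) =
        (Real.sqrt (s - ε) * Real.sqrt (s - ε)) * (s - ε) by ring,
        Real.mul_self_sqrt (by linarith)]
  have haa_sa : IsSelfAdjoint aa := .of_nonneg haa
  have hsub : aa - algebraMap ℝ A⁺¹ ε = cfc (fun s : ℝ => s - ε) aa := by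
    rw [cfc_sub (fun s : ℝ => s) (fun _ : ℝ => ε) aa continuousOn_id continuousOn_const,
      cfc_id' (R := ℝ) aa haa_sa, cfc_const ε aa haa_sa]
  have m1 : cfc (fun s : ℝ => g s * ((s - ε) * g s)) aa
      = cfc g aa * cfc (fun s : ℝ => (s - ε) * g s) aa :=
    cfc_mul _ _ aa hgc.continuousOn (by fun_prop)
  have m2 : cfc (fun s : ℝ => (s - ε) * g s) aa
      = cfc (fun s : ℝ => s - ε) aa * cfc g aa :=
    cfc_mul _ _ aa (by fun_prop) hgc.continuousOn
  have m3 : cfc (fun s : ℝ => f s * f s) aa = cfc f aa * cfc f aa :=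
    cfc_mul _ _ aa hfc.continuousOn hfc.continuousOn
  have m4 : cfc (fun s : ℝ => g s * g s) aa = cfc g aa * cfc g aa :=
    cfc_mul _ _ aa hgc.continuousOn hgc.continuousOn
  have step3 : ra * (aa - algebraMap ℝ A⁺¹ ε) * ra = ea * ea := by
    rw [hsub, h_ra, h_ea, ← m3, mul_assoc, ← m2, ← m1]
    exact cfc_congr hgg
  have hrr : ra * ra = ea := by
    rw [h_ra, h_ea, ← m4]
    refine cfc_congr fun s _ => ?_
    simp only [hfdef, hgdef]
    exact Real.mul_self_sqrt (le_max_right _ _)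
  have step4 : ra * (ba - algebraMap ℝ A⁺¹ δ) * ra = B - δ • ea := by
    rw [mul_sub, sub_mul, hBdef]
    congr 1
    rw [Algebra.algebraMap_eq_smul_one, mul_smul_comm, smul_mul_assoc, mul_one, hrr]
  have key1 : ea * ea + δ • ea ≤ B := by
    rw [← le_sub_iff_add_le]
    calc ea * ea = ra * (aa - algebraMap ℝ A⁺¹ ε) * ra := step3.symm
      _ ≤ ra * (ba - algebraMap ℝ A⁺¹ δ) * ra := step2
      _ = B - δ • ea := step4
  have key2 : δ • ea ≤ B := by
    refine le_trans ?_ key1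
    have : 0 ≤ ea * ea := by
      have := star_mul_self_nonneg ea
      rwa [hea_sa.star_eq] at this
    exact le_add_of_nonneg_left this
  have he : 0 ≤ e := by
    rw [hedef]
    exact cfcₙ_nonneg fun s _ => le_max_right _ _
  have hea : 0 ≤ ea := inr_nonneg_iff.mpr he
  have hB_sa : IsSelfAdjoint B := .of_nonneg hB
  have hspecB : ∀ s ∈ spectrum ℝ B, 0 ≤ s := fun s hs => spectrum_nonneg_of_nonneg hB hs
  set b' : A := r * b * r with hb'def
  have hb'B : (b' : A⁺¹) = B := by
    rw [hb'def, inr_mul, inr_mul]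
  have key : ∀ t : ℝ, 0 < t → ∃ x : A, ‖e - star x * b * x‖ ≤ δ⁻¹ * t := by
    intro t ht
    set h₁ : ℝ → ℝ := fun s => (Real.sqrt (s + t))⁻¹ with hh₁def
    have hh₁c : ContinuousOn h₁ (spectrum ℝ B) := by
      refine ContinuousOn.inv₀ (by fun_prop) fun s hs => ?_
      have := hspecB s hs
      exact Real.sqrt_ne_zero'.mpr (by positivity)
    set C : A⁺¹ := cfc h₁ B with hCdef
    have hC_sa : IsSelfAdjoint C := hCdef ▸ cfc_predicate h₁ B
    set x : A := r * cfcₙ (fun s => h₁ s - h₁ 0) b' * r + (h₁ 0) • e with hxdef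
    refine ⟨x, ?_⟩
    have hinner : ((cfcₙ (fun s => h₁ s - h₁ 0) b' : A) : A⁺¹)
        = C - algebraMap ℝ A⁺¹ (h₁ 0) := by
      rw [Unitization.real_cfcₙ_eq_cfc_inr b' _ (by simp), hb'B,
        cfc_sub h₁ (fun _ => h₁ 0) B hh₁c continuousOn_const, cfc_const (h₁ 0) B hB_sa, hCdef]
    have hx : (x : A⁺¹) = ra * C * ra := by
      rw [hxdef, inr_add, inr_smul, inr_mul, inr_mul, hinner]
      rw [mul_sub, sub_mul, Algebra.algebraMap_eq_smul_one, mul_smul_comm, smul_mul_assoc,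
        mul_one, hrr]
      abel
    have hconj : ((star x * b * x : A) : A⁺¹) = ra * (C * B * C) * ra := by
      rw [inr_mul, inr_mul, inr_star, hx]
      simp only [star_mul, hC_sa.star_eq, hra_sa.star_eq, hBdef, mul_assoc]
      rfl
    set k : ℝ → ℝ := fun s => Real.sqrt t * h₁ s with hkdef
    have hkc : ContinuousOn k (spectrum ℝ B) := hh₁c.const_smul (Real.sqrt t)
    set D : A⁺¹ := cfc k B with hDdef
    have hD_sa : IsSelfAdjoint D := hDdef ▸ cfc_predicate k B
    have hid : ContinuousOn (fun s : ℝ => s) (spectrum ℝ B) := continuousOn_id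
    have hmid : ContinuousOn (fun s : ℝ => s * h₁ s) (spectrum ℝ B) := continuousOn_id.mul hh₁c
    have m5 : cfc (fun s : ℝ => h₁ s * (s * h₁ s)) B = C * B * C := by
      rw [cfc_mul _ _ B hh₁c hmid, cfc_mul _ _ B hid hh₁c, cfc_id' (R := ℝ) B hB_sa, hCdef]
      simp only [hBdef, mul_assoc]
    have m6 : cfc (fun s : ℝ => k s * k s) B = D * D := cfc_mul _ _ B hkc hkc
    have hsqq : ∀ s ∈ spectrum ℝ B,
        (1 : ℝ) - h₁ s * (s * h₁ s) = k s * k s := by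
      intro s hs
      have h0 := hspecB s hs
      have hst : 0 < s + t := by positivity
      have hss : (Real.sqrt (s + t))⁻¹ * (Real.sqrt (s + t))⁻¹ = (s + t)⁻¹ := by
        rw [← mul_inv, Real.mul_self_sqrt hst.le]
      simp only [hkdef, hh₁def]
      rw [show (Real.sqrt (s+t))⁻¹ * (s * (Real.sqrt (s+t))⁻¹)
            = s * ((Real.sqrt (s+t))⁻¹ * (Real.sqrt (s+t))⁻¹) by ring, hss,
        show Real.sqrt t * (Real.sqrt (s+t))⁻¹ * (Real.sqrt t * (Real.sqrt (s+t))⁻¹)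
            = (Real.sqrt t * Real.sqrt t) * ((Real.sqrt (s+t))⁻¹ * (Real.sqrt (s+t))⁻¹) by ring,
        hss, Real.mul_self_sqrt ht.le]
      field_simp
      ring
    have hcfceq : cfc (fun s : ℝ => 1 - h₁ s * (s * h₁ s)) B
        = cfc (fun s : ℝ => k s * k s) B := cfc_congr hsqq
    have honeB : cfc (fun _ : ℝ => (1:ℝ)) B = 1 := cfc_const_one ℝ B hB_sa
    have hsubB : cfc (fun s : ℝ => 1 - h₁ s * (s * h₁ s)) B
        = 1 - cfc (fun s : ℝ => h₁ s * (s * h₁ s)) B := by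
      rw [cfc_sub (fun _ : ℝ => (1:ℝ)) (fun s : ℝ => h₁ s * (s * h₁ s)) B continuousOn_const (hh₁c.mul hmid), honeB]
    have hDD : ea - ((star x * b * x : A) : A⁺¹) = ra * (D * D) * ra := by
      rw [hconj, ← m5, ← m6, ← hcfceq, hsubB, ← hrr]
      noncomm_ring
    have hstar : ea - ((star x * b * x : A) : A⁺¹) = star (D * ra) * (D * ra) := by
      rw [hDD]
      simp only [star_mul, hD_sa.star_eq, hra_sa.star_eq, mul_assoc]
    have hyy : (D * ra) * star (D * ra) = D * ea * D := by
      simp only [star_mul, hD_sa.star_eq, hra_sa.star_eq]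
      rw [show D * ra * (ra * D) = D * (ra * ra) * D by noncomm_ring, hrr]
    have hDeaD_nonneg : 0 ≤ D * ea * D := by
      have h2 := star_left_conjugate_nonneg hea D
      rwa [hD_sa.star_eq] at h2
    have hmidk : ContinuousOn (fun s : ℝ => s * k s) (spectrum ℝ B) := continuousOn_id.mul hkc
    have m7 : cfc (fun s : ℝ => k s * (s * k s)) B = D * B * D := by
      rw [cfc_mul _ _ B hkc hmidk, cfc_mul _ _ B hid hkc, cfc_id' (R := ℝ) B hB_sa, hDdef]
      simp only [hBdef, mul_assoc]
    have hnormDBD : ‖D * B * D‖ ≤ t := by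
      rw [← m7]
      refine norm_cfc_le ht.le fun s hs => ?_
      have h0 := hspecB s hs
      have hst : 0 < s + t := by positivity
      have hss : (Real.sqrt (s + t))⁻¹ * (Real.sqrt (s + t))⁻¹ = (s + t)⁻¹ := by
        rw [← mul_inv, Real.mul_self_sqrt hst.le]
      have hks : k s * (s * k s) = t * (s / (s + t)) := by
        simp only [hkdef, hh₁def]
        rw [show Real.sqrt t * (Real.sqrt (s+t))⁻¹ * (s * (Real.sqrt t * (Real.sqrt (s+t))⁻¹))
            = (Real.sqrt t * Real.sqrt t) * (s * ((Real.sqrt (s+t))⁻¹ * (Real.sqrt (s+t))⁻¹))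
            by ring, hss, Real.mul_self_sqrt ht.le, div_eq_mul_inv]
      rw [hks, Real.norm_eq_abs, abs_of_nonneg (by positivity)]
      exact mul_le_of_le_one_right ht.le
        (div_le_one_of_le₀ (le_add_of_nonneg_right ht.le) hst.le)
    have hconj2 : δ • (D * ea * D) ≤ D * B * D := by
      have h2 := star_left_conjugate_le_conjugate key2 D
      rw [hD_sa.star_eq] at h2
      calc δ • (D * ea * D) = D * (δ • ea) * D := by
            simp only [mul_smul_comm, smul_mul_assoc]
        _ ≤ D * B * D := h2
    have hnorm1 : δ * ‖D * ea * D‖ ≤ t := by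
      have h2 := CStarAlgebra.norm_le_norm_of_nonneg_of_le
        (smul_nonneg hδ.le hDeaD_nonneg) hconj2
      rw [norm_smul, Real.norm_eq_abs, abs_of_pos hδ] at h2
      exact h2.trans hnormDBD
    have hfinal : ‖e - star x * b * x‖ = ‖D * ea * D‖ := by
      rw [← norm_inr (𝕜 := ℂ) (e - star x * b * x), inr_sub, ← headef, hstar,
        CStarRing.norm_star_mul_self, ← CStarRing.norm_self_mul_star, hyy]
    rw [hfinal]
    have h3 := mul_le_mul_of_nonneg_left hnorm1 (inv_nonneg.mpr hδ.le)
    rwa [← mul_assoc, inv_mul_cancel₀ hδ.ne', one_mul] at h3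
  choose x hx using fun n : ℕ => key (1 / ((n : ℝ) + 1)) (by positivity)
  have hlim : Tendsto (fun n : ℕ => δ⁻¹ * (1 / ((n : ℝ) + 1))) atTop (𝓝 0) := by
    simpa using tendsto_one_div_add_atTop_nhds_zero_nat.const_mul δ⁻¹
  have h0 : Tendsto (fun n => e - star (x n) * b * x n) atTop (𝓝 0) :=
    squeeze_zero_norm hx hlim
  have hfin : Tendsto (fun n => star (x n) * b * x n) atTop (𝓝 e) := by
    have h1 := (tendsto_const_nhds (x := e) (f := atTop)).sub h0
    simpa using h1
  exact ⟨x, hfin⟩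
end

section
/- Let A be a unital C*-algebra, a a positive element of A, 0 < ε' < ε, and let A⁰ be the hereditary subalgebra generated by g_ε(a), where g_ε(t) = max{1 − t/ε, 0}. If w is a unitary in A satisfying w·(a − ε')₊ = (a − ε')₊, then w ∈ A⁰ + ℂ·1. -/
/-- Let `A` be a unital C*-algebra, `a ≥ 0`, `0 < ε' < ε`, and let `A⁰` be the hereditary
subalgebra generated by `g_ε(a)` (the closure of `g_ε(a) A g_ε(a)`), where
`g_ε(t) = max (1 - t/ε) 0`.  If a unitary `w` satisfies `w (a - ε')₊ = (a - ε')₊`, then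
`w ∈ A⁰ + ℂ·1`. -/
theorem stmt_13 {A : Type*} [CStarAlgebra A] [PartialOrder A] [StarOrderedRing A]
    (a : A) (ha : 0 ≤ a) (ε' ε : ℝ) (h0 : 0 < ε') (hε : ε' < ε)
    (w : A) (hw : star w * w = 1 ∧ w * star w = 1)
    (hfix : w * cfc (fun t : ℝ => max (t - ε') 0) a = cfc (fun t : ℝ => max (t - ε') 0) a) :
    ∃ x ∈ closure {z : A | ∃ y : A,
        z = cfc (fun t : ℝ => max (1 - t / ε) 0) a * y * cfc (fun t : ℝ => max (1 - t / ε) 0) a},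
      ∃ c : ℂ, w = x + c • (1 : A) := by
  have hsa : IsSelfAdjoint a := .of_nonneg ha
  set ε'' : ℝ := (ε' + ε) / 2 with hε''
  have hc : (0:ℝ) < ε'' - ε' := by simp [hε'']; linarith
  have hε''ε : ε'' < ε := by simp [hε'']; linarith
  have hεpos : (0:ℝ) < ε := h0.trans hε
  set δ : ℝ := (ε - ε'') / ε with hδ
  have hδpos : 0 < δ := div_pos (by linarith) hεpos
  set f : ℝ → ℝ := fun t => max (t - ε') 0 with hf
  set g : ℝ → ℝ := fun t => max (1 - t / ε) 0 with hg
  set m : ℝ → ℝ := fun t => (max (t - ε') (ε'' - ε'))⁻¹ with hm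
  set k : ℝ → ℝ := fun t => min (max (t - ε') 0 / (ε'' - ε')) 1 with hk
  set d : ℝ → ℝ := fun t => 1 - k t with hd
  set q : ℝ → ℝ := fun t => d t / max (g t) δ with hq
  -- continuity facts
  have hmc : Continuous m := by
    apply Continuous.inv₀
    · fun_prop
    · intro t
      exact ne_of_gt (lt_of_lt_of_le hc (le_max_right _ _))
  have hkc : Continuous k := by fun_prop
  have hdc : Continuous d := by fun_prop
  have hgc : Continuous g := by fun_prop
  have hfc : Continuous f := by fun_prop
  have hqc : Continuous q := by
    apply Continuous.div hdc (by fun_prop)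
    intro t
    exact ne_of_gt (lt_of_lt_of_le hδpos (le_max_right _ _))
  -- function identities
  have hkfm : ∀ t, k t = f t * m t := by
    intro t
    simp only [hk, hf, hm]
    rcases le_total t ε' with h | h
    · rw [max_eq_right (by linarith), zero_div, zero_mul, min_eq_left zero_le_one]
    · rw [max_eq_left (by linarith)]
      rcases le_total (t - ε') (ε'' - ε') with h2 | h2
      · rw [max_eq_right h2, min_eq_left (by rw [div_le_one hc]; exact h2), div_eq_mul_inv]
      · rw [max_eq_left h2, min_eq_right (by rw [le_div_iff₀ hc]; linarith),
          mul_inv_cancel₀ (by linarith)]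
  have hdgq : ∀ t, d t = g t * q t := by
    intro t
    rcases le_total t ε'' with h | h
    · have hgt : g t = 1 - t / ε := by
        simp only [hg]
        rw [max_eq_left]
        rw [sub_nonneg, div_le_one hεpos]; linarith
      have hgδ : δ ≤ g t := by
        rw [hgt, hδ]
        rw [div_le_iff₀ hεpos]
        have he : (1 - t / ε) * ε = ε - t := by field_simp
        rw [he]; linarith
      have : max (g t) δ = g t := max_eq_left hgδ
      simp only [hq, this]
      rw [mul_div_cancel₀ _ (hδpos.trans_le hgδ).ne']
    · have hdt : d t = 0 := by
        simp only [hd, hk, sub_eq_zero]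
        symm
        rw [max_eq_left (by linarith)]
        rw [min_eq_right]
        rw [le_div_iff₀ hc]; linarith
      simp only [hq, hdt, zero_div, mul_zero]
  -- orthogonality: (w - 1) * p = 0 and p * (w - 1) = 0 where p = cfc f a
  set p : A := cfc f a with hp
  have hwp : (w - 1) * p = 0 := by rw [sub_mul, one_mul, hfix, sub_self]
  have hpsa : IsSelfAdjoint p := cfc_predicate f a
  have hpw : p * (w - 1) = 0 := by
    have h1 : p * star w = p := by
      have := congrArg star hfix
      rwa [star_mul, hpsa.star_eq] at this
    have h2 : p * w = p := by
      calc p * w = p * star w * w := by rw [h1]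
        _ = p * (star w * w) := by rw [mul_assoc]
        _ = p := by rw [hw.1, mul_one]
    rw [mul_sub, mul_one, h2, sub_self]
  -- (w-1) annihilates cfc k a on both sides
  have hka : cfc k a = p * cfc m a := by
    rw [hp, ← cfc_mul f m a hfc.continuousOn hmc.continuousOn]
    exact cfc_congr fun t _ => hkfm t
  have hka' : cfc k a = cfc m a * p := by
    rw [hp, ← cfc_mul m f a hmc.continuousOn hfc.continuousOn]
    exact cfc_congr fun t _ => by rw [hkfm t, mul_comm]
  have hwk : (w - 1) * cfc k a = 0 := by rw [hka, ← mul_assoc, hwp, zero_mul]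
  have hkw : cfc k a * (w - 1) = 0 := by rw [hka', mul_assoc, hpw, mul_zero]
  -- d(a) = 1 - k(a)
  have hda : cfc d a = 1 - cfc k a := by
    rw [hd]
    rw [cfc_sub (fun _ => (1:ℝ)) k a (by fun_prop) hkc.continuousOn]
    rw [cfc_const_one ℝ a hsa]
  have hwd : (w - 1) * cfc d a = w - 1 := by
    rw [hda, mul_sub, mul_one, hwk, sub_zero]
  have hdw : cfc d a * (w - 1) = w - 1 := by
    rw [hda, sub_mul, one_mul, hkw, sub_zero]
  -- d(a) = g(a) q(a) = q(a) g(a)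
  have hdgq' : cfc d a = cfc g a * cfc q a := by
    rw [← cfc_mul g q a hgc.continuousOn hqc.continuousOn]
    exact cfc_congr fun t _ => hdgq t
  have hdqg : cfc d a = cfc q a * cfc g a := by
    rw [← cfc_mul q g a hqc.continuousOn hgc.continuousOn]
    exact cfc_congr fun t _ => by rw [hdgq t, mul_comm]
  refine ⟨w - 1, ?_, 1, by simp⟩
  apply subset_closure
  refine ⟨cfc q a * (w - 1) * cfc q a, ?_⟩
  calc w - 1 = cfc d a * (w - 1) * cfc d a := by rw [hdw, hwd]
    _ = cfc g a * (cfc q a * (w - 1) * cfc q a) * cfc g a := by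
        nth_rewrite 1 [hdgq']
        nth_rewrite 1 [hdqg]
        noncomm_ring
end

section
/- Let V be a simple positive ordered abelian semigroup (every nonzero element is an order unit) equipped with the algebraic order, and let γ : V → G be the Grothendieck group homomorphism with G⁺ = γ(V). If V is almost unperforated, then G⁺ is almost unperforated: for x, y ∈ V and n ∈ ℕ with (n+1)γ(x) ≤ nγ(y), one has γ(x) ≤ γ(y). -/
/-- Let `V` be a simple positive ordered abelian semigroup with the algebraic order, and
`γ : V → K₀ = G` the Grothendieck map with positive cone `G⁺ = γ(V)`; the order on `G` is
`γ(x) ≤ γ(y)` iff `γ(y) - γ(x) ∈ γ(V)`, i.e. iff `∃ z u, y + u = x + z + u`.  If `V` is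
almost unperforated then so is `G⁺`: if `(n+1)γ(x) ≤ nγ(y)` then `γ(x) ≤ γ(y)`. -/
theorem stmt_16 {V : Type*} [AddCommMonoid V]
    (hsimple : ∀ y : V, y ≠ 0 → ∀ u : V, ∃ (k : ℕ) (w : V), k • y = u + w)
    (hau : ∀ (x y : V) (n m : ℕ), m < n → (∃ w : V, m • y = n • x + w) →
      ∃ w : V, y = x + w) :
    ∀ (x y : V) (n : ℕ),
      (∃ z u : V, n • y + u = (n + 1) • x + z + u) →
      ∃ z u : V, y + u = x + z + u := by
  rintro x y n ⟨z, u, h⟩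
  by_cases hy : y = 0
  · subst hy
    refine ⟨n • x + z, u, ?_⟩
    simp only [smul_zero, zero_add] at h ⊢
    nth_rewrite 1 [h]
    rw [succ_nsmul]
    abel
  · -- iterate the inequality
    have key : ∀ N : ℕ, N • (n • y) + u = N • ((n + 1) • x) + N • z + u := by
      intro N
      induction N with
      | zero => simp
      | succ N ih =>
        calc (N + 1) • (n • y) + u = N • (n • y) + (n • y + u) := by
              rw [succ_nsmul]; abel
          _ = N • (n • y) + ((n + 1) • x + z + u) := by rw [h]
          _ = (N • (n • y) + u) + ((n + 1) • x + z) := by abel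
          _ = (N • ((n + 1) • x) + N • z + u) + ((n + 1) • x + z) := by rw [ih]
          _ = (N + 1) • ((n + 1) • x) + (N + 1) • z + u := by
              simp only [succ_nsmul]; abel
    obtain ⟨k, w, hk⟩ := hsimple y hy u
    set N := k + 1 with hN
    have h2 : ((N * n) + k) • y = (N * (n + 1)) • x + (N • z + u + w) := by
      calc ((N * n) + k) • y = (N • (n • y) + u) + w := by
            rw [add_smul, mul_smul, hk]; abel
        _ = (N • ((n + 1) • x) + N • z + u) + w := by rw [key N]
        _ = (N * (n + 1)) • x + (N • z + u + w) := by rw [mul_smul]; abel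
    have hlt : N * n + k < N * (n + 1) := by
      have : N * (n + 1) = N * n + N := by ring
      omega
    obtain ⟨w', hw'⟩ := hau x y _ _ hlt ⟨_, h2⟩
    exact ⟨w', 0, by simp [hw']⟩
end

section
/- Let V be a positive ordered abelian semigroup with the algebraic order and the cancellation property, and let γ : V → G be the Grothendieck map with G⁺ = γ(V). If V is almost unperforated, then (G, G⁺) is almost unperforated. -/
/-- Let `V` be a positive ordered abelian semigroup with the algebraic order and the
cancellation property, and `γ : V → G` the Grothendieck map with `G⁺ = γ(V)`.  Every element
of `G` is a difference `γ(a) - γ(b)`, and `γ(a) - γ(b) ∈ G⁺` iff `∃ z u, a + u = b + z + u`.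
If `V` is almost unperforated, then `(G, G⁺)` is almost unperforated. -/
theorem stmt_17 {V : Type*} [AddCommMonoid V]
    (hcancel : ∀ a b c : V, a + c = b + c → a = b)
    (hau : ∀ (x y : V) (n m : ℕ), m < n → (∃ w : V, m • y = n • x + w) →
      ∃ w : V, y = x + w) :
    ∀ (a b : V) (n : ℕ),
      (∃ z u : V, n • a + u = n • b + z + u) →
      (∃ z u : V, (n + 1) • a + u = (n + 1) • b + z + u) →
      ∃ z u : V, a + u = b + z + u := by
  rintro a b n ⟨z₂, u₂, h1⟩ ⟨z₁, u₁, h2⟩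
  have E1 : n • a = n • b + z₂ := hcancel _ _ u₂ h1
  have E2 : (n + 1) • a = (n + 1) • b + z₁ := hcancel _ _ u₁ h2
  -- (n+1) • z₂ = n • z₁
  have h3 : ((n + 1) * n) • a = ((n + 1) * n) • b + (n + 1) • z₂ := by
    rw [mul_smul, E1, smul_add, ← mul_smul]
  have h4 : (n * (n + 1)) • a = (n * (n + 1)) • b + n • z₁ := by
    rw [mul_smul, E2, smul_add, ← mul_smul]
  rw [mul_comm] at h4
  have key : n • z₁ = (n + 1) • z₂ + 0 := by
    rw [add_zero]
    refine (hcancel _ _ (((n + 1) * n) • b) ?_).symm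
    rw [add_comm ((n+1) • z₂), add_comm (n • z₁), ← h3, ← h4]
  obtain ⟨w, hw⟩ := hau z₂ z₁ (n + 1) n (lt_add_one n) ⟨0, key⟩
  refine ⟨w, z₂ + n • b, ?_⟩
  have h5 := E2
  rw [succ_nsmul, succ_nsmul, E1, hw] at h5
  calc a + (z₂ + n • b) = n • b + z₂ + a := by abel
    _ = n • b + b + (z₂ + w) := h5
    _ = b + w + (z₂ + n • b) := by abel
end
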